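/- Let H and A be linearly ordered abelian groups, (K,v) a field with additive valuation with value group A and cross-section σ : A → Kˣ, β : H × H → A a normalized symmetric 2-cocycle, ψ : H → A a map with ψ(0) = 0, and β'(h,h') = β(h,h') − (ψ(h+h') − ψ(h) − ψ(h')). Then the map Φ : HahnSeries H K → HahnSeries H K defined by (Φ a).coeff(h) = (a.coeff h)·σ(ψ(h)) is a bijection that is additive and satisfies Φ(a ⋆_β b) = Φ(a) ⋆_{β'} Φ(b), where ⋆_β and ⋆_{β'} are the twisted multiplications determined by β and β'; moreover for nonzero a, val_{β'}(Φ a) = g(val_β(a)), where g(z,h) = (z + ψ(h), h) and val_β, val_{β'} are the valuations val(f) = (v(f.coeff h₀), h₀), h₀ = min supp(f). Hence K(t^H,β) and K(t^H,β') are isomorphic as valued fields. -/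

import Mathlib

/-- Twisted multiplication on Hahn series. -/
noncomputable def tmul {K H A : Type*} [Field K]
    [AddCommGroup H] [LinearOrder H] [IsOrderedAddMonoid H] [AddCommGroup A]
    (σ : A → Kˣ) (β : H → H → A) (x y : HahnSeries H K) : HahnSeries H K where
  coeff l := ∑ ij ∈ Finset.addAntidiagonal x.isPWO_support y.isPWO_support l,
      x.coeff ij.1 * y.coeff ij.2 * (σ (-β ij.1 ij.2) : K)
  isPWO_support' := by
    refine Set.IsPWO.mono (x.isPWO_support.add y.isPWO_support) ?_
    intro l hl
    obtain ⟨ij, hij, -⟩ :=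
      Finset.exists_ne_zero_of_sum_ne_zero (Function.mem_support.mp hl)
    replace hij := Finset.mem_antidiagonal.mp hij
    exact Set.mem_add.mpr ⟨ij.1, hij.1, ij.2, hij.2.1, hij.2.2⟩

/-- The map `Φ` rescaling the `h`-th coefficient by `σ (ψ h)`. -/
noncomputable def tscale {K H A : Type*} [Field K]
    [AddCommGroup H] [LinearOrder H] [IsOrderedAddMonoid H] [AddCommGroup A]
    (σ : A → Kˣ) (ψ : H → A) (a : HahnSeries H K) : HahnSeries H K where
  coeff h := a.coeff h * (σ (ψ h) : K)
  isPWO_support' := by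
    refine Set.IsPWO.mono a.isPWO_support ?_
    intro h hh
    refine Function.mem_support.mpr fun h0 => Function.mem_support.mp hh ?_
    rw [h0, zero_mul]

/-- The minimum of the support of a nonzero Hahn series. -/
noncomputable def minSupp {K H : Type*} [Field K] [AddCommGroup H] [LinearOrder H] [IsOrderedAddMonoid H]
    (f : HahnSeries H K) (hf : f ≠ 0) : H :=
  f.isWF_support.min (HahnSeries.support_nonempty_iff.mpr hf)

/-- The valuation `val f = (v (f.coeff h₀), h₀)`, `h₀ = min supp f`. -/
noncomputable def tval {K H A : Type*} [Field K] [AddCommGroup H] [LinearOrder H] [IsOrderedAddMonoid H]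
    [AddCommGroup A] [LinearOrder A] [IsOrderedAddMonoid A]
    (v : K → WithTop A) (f : HahnSeries H K) (hf : f ≠ 0) : WithTop A × H :=
  (v (f.coeff (minSupp f hf)), minSupp f hf)

/-- With `(K, v)` a valued field with value group `A` and
cross-section `σ`, `β` a normalized symmetric 2-cocycle, `ψ : H → A` with
`ψ 0 = 0` and `β' h h' = β h h' - (ψ (h+h') - ψ h - ψ h')`, the coefficientwise
rescaling `Φ` by `σ (ψ h)` is an additive bijection with
`Φ (a ⋆_β b) = Φ a ⋆_{β'} Φ b`, and for nonzero `a`,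
`val_{β'} (Φ a) = g (val_β a)` where `g (z,h) = (z + ψ h, h)`.
Hence `K(t^H,β) ≅ K(t^H,β')` as valued fields. -/
theorem twisted_hahn_series_cohomologous_iso
    {K H A : Type*} [Field K]
    [AddCommGroup H] [LinearOrder H] [IsOrderedAddMonoid H] [AddCommGroup A] [LinearOrder A] [IsOrderedAddMonoid A]
    (v : K → WithTop A)
    (hv_top : ∀ x : K, v x = ⊤ ↔ x = 0)
    (hv_mul : ∀ x y : K, v (x * y) = v x + v y)
    (hv_add : ∀ x y : K, min (v x) (v y) ≤ v (x + y))
    (hv_surj : ∀ a : A, ∃ x : K, v x = (a : WithTop A))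
    (σ : A → Kˣ) (hσ : ∀ a a' : A, σ (a + a') = σ a * σ a')
    (hσ_cross : ∀ a : A, v ((σ a : K)) = (a : WithTop A))
    (β : H → H → A)
    (hβsymm : ∀ h h' : H, β h h' = β h' h)
    (hβnorm : ∀ h : H, β h 0 = 0 ∧ β 0 h = 0)
    (hβcoc : ∀ h h' h'' : H, β h h' + β (h + h') h'' = β h' h'' + β h (h' + h''))
    (ψ : H → A) (hψ0 : ψ 0 = 0)
    (β' : H → H → A)
    (hβ' : ∀ h h' : H, β' h h' = β h h' - (ψ (h + h') - ψ h - ψ h')) :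
    Function.Bijective (tscale (K := K) σ ψ) ∧
    (∀ a b : HahnSeries H K, tscale σ ψ (a + b) = tscale σ ψ a + tscale σ ψ b) ∧
    (∀ a b : HahnSeries H K,
      tscale σ ψ (tmul σ β a b) = tmul σ β' (tscale σ ψ a) (tscale σ ψ b)) ∧
    (∀ (a : HahnSeries H K) (ha : a ≠ 0),
      ∃ hΦ : tscale σ ψ a ≠ 0,
        tval v (tscale σ ψ a) hΦ =
          ((tval v a ha).1 + (ψ ((tval v a ha).2) : WithTop A), (tval v a ha).2)) := by
  -- basic facts about σ
  have hσ0 : σ 0 = 1 := by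
    have h := hσ 0 0
    rw [add_zero] at h
    exact (mul_left_cancel (a := σ 0) (by rw [← h, mul_one])).symm
  have hσneg : ∀ a : A, σ (-a) = (σ a)⁻¹ := by
    intro a
    refine eq_inv_of_mul_eq_one_left ?_
    rw [← hσ, neg_add_cancel, hσ0]
  have hcancel : ∀ (a : A) (x : K), x * (σ a : K) * (σ (-a) : K) = x := by
    intro a x
    rw [mul_assoc, ← Units.val_mul, ← hσ, add_neg_cancel, hσ0, Units.val_one, mul_one]
  -- support of tscale
  have hsupp : ∀ (φ : H → A) (a : HahnSeries H K),
      (tscale σ φ a).support = a.support := by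
    intro φ a
    ext h
    simp only [HahnSeries.mem_support, tscale]
    constructor
    · intro hne h0; exact hne (by rw [h0, zero_mul])
    · intro hne; exact mul_ne_zero hne (σ (φ h)).ne_zero
  refine ⟨?_, ?_, ?_, ?_⟩
  · refine Function.bijective_iff_has_inverse.mpr ⟨tscale σ (fun h => -ψ h), ?_, ?_⟩
    · intro a; ext h
      show a.coeff h * (σ (ψ h) : K) * (σ (-ψ h) : K) = a.coeff h
      exact hcancel _ _
    · intro a; ext h
      show a.coeff h * (σ (-ψ h) : K) * (σ (ψ h) : K) = a.coeff h
      rw [mul_assoc, ← Units.val_mul, ← hσ, neg_add_cancel, hσ0, Units.val_one, mul_one]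
  · intro a b; ext h
    show (a + b).coeff h * (σ (ψ h) : K) = a.coeff h * _ + b.coeff h * _
    rw [HahnSeries.coeff_add, add_mul]
  · intro a b; ext l
    show (tmul σ β a b).coeff l * (σ (ψ l) : K) = (tmul σ β' _ _).coeff l
    have hanti : Finset.addAntidiagonal (tscale σ ψ a).isPWO_support
        (tscale σ ψ b).isPWO_support l
        = Finset.addAntidiagonal a.isPWO_support b.isPWO_support l := by
      ext ij
      simp only [Finset.mem_addAntidiagonal, hsupp]
    show (∑ ij ∈ Finset.addAntidiagonal a.isPWO_support b.isPWO_support l,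
        a.coeff ij.1 * b.coeff ij.2 * (σ (-β ij.1 ij.2) : K)) * (σ (ψ l) : K)
      = ∑ ij ∈ Finset.addAntidiagonal (tscale σ ψ a).isPWO_support
          (tscale σ ψ b).isPWO_support l,
        (tscale σ ψ a).coeff ij.1 * (tscale σ ψ b).coeff ij.2 * (σ (-β' ij.1 ij.2) : K)
    rw [hanti, Finset.sum_mul]
    refine Finset.sum_congr rfl ?_
    intro ij hij
    replace hij := Finset.mem_antidiagonal.mp hij
    have hl : ij.1 + ij.2 = l := hij.2.2
    show a.coeff ij.1 * b.coeff ij.2 * (σ (-β ij.1 ij.2) : K) * (σ (ψ l) : K)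
      = a.coeff ij.1 * (σ (ψ ij.1) : K) * (b.coeff ij.2 * (σ (ψ ij.2) : K))
          * (σ (-β' ij.1 ij.2) : K)
    have hb' : -β' ij.1 ij.2 = -β ij.1 ij.2 + ψ l + (-ψ ij.1 + -ψ ij.2) := by
      rw [hβ' ij.1 ij.2, ← hl]; abel
    rw [hb', hσ, hσ, hσ, hσneg, hσneg]
    push_cast
    have h1 : (σ (ψ ij.1) : K) ≠ 0 := (σ _).ne_zero
    have h2 : (σ (ψ ij.2) : K) ≠ 0 := (σ _).ne_zero
    field_simp
    ring_nf
    have hone : (σ (ψ ij.2) : K) * (σ (-ψ ij.2) : K) = 1 := by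
      rw [← Units.val_mul, ← hσ, add_neg_cancel, hσ0, Units.val_one]
    conv_rhs => rw [mul_assoc]
    rw [hone, mul_one]
  · intro a ha
    have hne : tscale σ ψ a ≠ 0 := by
      intro h0
      apply ha
      ext h
      have := congrArg (fun f : HahnSeries H K => f.coeff h) h0
      simp only [tscale, HahnSeries.coeff_zero] at this ⊢
      rcases mul_eq_zero.mp this with h' | h'
      · exact h'
      · exact absurd h' (σ (ψ h)).ne_zero
    refine ⟨hne, ?_⟩
    have hmin : minSupp (tscale σ ψ a) hne = minSupp a ha := by
      have hs := hsupp ψ a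
      have m1 : minSupp a ha ∈ (tscale σ ψ a).support := by
        rw [hs]; exact a.isWF_support.min_mem _
      have m2 : minSupp (tscale σ ψ a) hne ∈ a.support := by
        rw [← hs]; exact (tscale σ ψ a).isWF_support.min_mem _
      exact le_antisymm (Set.IsWF.min_le _ _ m1) (Set.IsWF.min_le _ _ m2)
    have hc : (tscale σ ψ a).coeff (minSupp a ha)
        = a.coeff (minSupp a ha) * (σ (ψ (minSupp a ha)) : K) := rfl
    simp only [tval, hmin, hc, hv_mul, hσ_cross]
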